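/- There exist universal constants c₀ > 0 and 0 < c ≤ C such that for all ρ, ν ∈ (0, 1/2) with 2ν² ≤ ρ ≤ ν, there exist distributions p, q on [3] with d_h²(p,q) = ρ and d_TV(p,q) = ν such that for every ε ≥ 1 with e^ε ≤ c₀/ρ, one has c·max(ν², e^ε·ρ²) ≤ sup over T ∈ P^ε_{3,3} of d_h²(Tp, Tq) ≤ C·max(ν², e^ε·ρ²). -/

import Mathlib

open scoped Classical ENNReal
open Finset

noncomputable section

/-- `p` is a probability distribution on `Fin k`. -/
def IsDist {k : ℕ} (p : Fin k → ℝ) : Prop :=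
  (∀ i, 0 ≤ p i) ∧ ∑ i, p i = 1

/-- `T` is a channel from `[k]` to `[ℓ]`: nonnegative entries, columns sum to 1. -/
def IsChannel {ℓ k : ℕ} (T : Matrix (Fin ℓ) (Fin k) ℝ) : Prop :=
  (∀ r c, 0 ≤ T r c) ∧ ∀ c, ∑ r, T r c = 1

/-- Squared Hellinger divergence `d_h²(p,q) = Σ_i (√p_i − √q_i)²`. -/
def hellingerSq {k : ℕ} (p q : Fin k → ℝ) : ℝ :=
  ∑ i, (Real.sqrt (p i) - Real.sqrt (q i)) ^ 2

/-- Total variation distance `d_TV(p,q) = (1/2) Σ_i |p_i − q_i|`. -/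
def tvDist {k : ℕ} (p q : Fin k → ℝ) : ℝ :=
  (1 / 2) * ∑ i, |p i - q i|

/-- `T` is an `ε`-LDP channel: `T(r,c) ≤ e^ε T(r,c')` for all rows `r`, columns `c, c'`. -/
def IsLDP {ℓ k : ℕ} (ε : ℝ) (T : Matrix (Fin ℓ) (Fin k) ℝ) : Prop :=
  IsChannel T ∧ ∀ r c c', T r c ≤ Real.exp ε * T r c'

/-! ### Auxiliary lemmas -/

lemma sqrt_sub_sq_le_div' {x y m : ℝ} (hx : 0 ≤ x) (hy : 0 ≤ y) (hm : 0 < m)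
    (h : m ≤ (Real.sqrt x + Real.sqrt y)^2) :
    (Real.sqrt x - Real.sqrt y)^2 ≤ (x - y)^2 / m := by
  rw [le_div_iff₀ hm]
  have key : (Real.sqrt x - Real.sqrt y) * (Real.sqrt x + Real.sqrt y) = x - y := by
    linear_combination Real.sq_sqrt hx - Real.sq_sqrt hy
  have h2 : (Real.sqrt x - Real.sqrt y)^2 * m
      ≤ (Real.sqrt x - Real.sqrt y)^2 * (Real.sqrt x + Real.sqrt y)^2 :=
    mul_le_mul_of_nonneg_left h (sq_nonneg _)
  have h3 : (Real.sqrt x - Real.sqrt y)^2 * (Real.sqrt x + Real.sqrt y)^2 = (x - y)^2 := by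
    rw [← mul_pow, key]
  linarith

lemma div_le_sqrt_sub_sq' {x y M : ℝ} (hx : 0 ≤ x) (hy : 0 ≤ y) (hM : 0 < M)
    (h : (Real.sqrt x + Real.sqrt y)^2 ≤ M) :
    (x - y)^2 / M ≤ (Real.sqrt x - Real.sqrt y)^2 := by
  rw [div_le_iff₀ hM]
  have key : (Real.sqrt x - Real.sqrt y) * (Real.sqrt x + Real.sqrt y) = x - y := by
    linear_combination Real.sq_sqrt hx - Real.sq_sqrt hy
  have h3 : (Real.sqrt x - Real.sqrt y)^2 * (Real.sqrt x + Real.sqrt y)^2 = (x - y)^2 := by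
    rw [← mul_pow, key]
  nlinarith [sq_nonneg (Real.sqrt x - Real.sqrt y)]

lemma rowB {E a ν t₁ t₂ t₃ s u : ℝ} (hE : 1 ≤ E) (ha : 0 ≤ a) (hν : 0 ≤ ν)
    (ht₁ : 0 ≤ t₁) (ht₂ : 0 ≤ t₂) (ht₃ : 0 ≤ t₃) (h12 : t₁ ≤ E * t₂)
    (hs : 0 ≤ s) (hu0 : 0 ≤ u) (hu4 : (t₂ + t₃)/4 ≤ u)
    (hsu : s - u = (t₁ - t₂) * a + (t₂ - t₃) * ν) :
    (Real.sqrt s - Real.sqrt u)^2 ≤ 8*E*a^2*|t₁ - t₂| + 8*ν^2*(t₂ + t₃) := by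
  rcases eq_or_lt_of_le (by positivity : (0:ℝ) ≤ t₂ + t₃) with h0 | h0
  · have ht2 : t₂ = 0 := by linarith
    have ht3 : t₃ = 0 := by linarith
    have ht1 : t₁ = 0 := le_antisymm (by rw [ht2] at h12; linarith) ht₁
    have hsu' : s = u := by rw [ht1, ht2, ht3] at hsu; linarith [hsu]
    rw [hsu']
    simp
    positivity
  · have hu : 0 < u := lt_of_lt_of_le (by linarith) hu4
    have key := sqrt_sub_sq_le_div' hs hu0 hu
      (by nlinarith [Real.sq_sqrt hu0, Real.sqrt_nonneg s, Real.sqrt_nonneg u,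
        sq_nonneg (Real.sqrt s)])
    have habs : |t₁ - t₂| ≤ E * (t₂ + t₃) := by
      rcases le_total t₂ t₁ with hc | hc
      · rw [abs_of_nonneg (by linarith)]; nlinarith
      · rw [abs_of_nonpos (by linarith)]; nlinarith
    have hD2 : (t₁ - t₂)^2 ≤ E * (t₂ + t₃) * |t₁ - t₂| := by
      nlinarith [sq_abs (t₁ - t₂), abs_nonneg (t₁ - t₂)]
    have hF : (t₂ - t₃)^2 ≤ (t₂ + t₃)^2 := by nlinarith
    have h1 : (s - u)^2 ≤ 2*(t₁-t₂)^2*a^2 + 2*(t₂-t₃)^2*ν^2 := by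
      rw [hsu]; nlinarith [sq_nonneg ((t₁-t₂)*a - (t₂-t₃)*ν)]
    have h4 : (s - u)^2 / u ≤ (8*E*a^2*|t₁-t₂| + 8*ν^2*(t₂+t₃)) := by
      rw [div_le_iff₀ hu]
      have h5 : (8*E*a^2*|t₁-t₂| + 8*ν^2*(t₂+t₃)) * ((t₂+t₃)/4)
          ≤ (8*E*a^2*|t₁-t₂| + 8*ν^2*(t₂+t₃)) * u := by
        apply mul_le_mul_of_nonneg_left hu4
        have : 0 ≤ |t₁ - t₂| := abs_nonneg _
        positivity
      have h6 : (s-u)^2 ≤ (8*E*a^2*|t₁-t₂| + 8*ν^2*(t₂+t₃)) * ((t₂+t₃)/4) := by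
        have e2 := mul_le_mul_of_nonneg_right hD2 (sq_nonneg a)
        have e3 := mul_le_mul_of_nonneg_right hF (sq_nonneg ν)
        have e4 : (8*E*a^2*|t₁-t₂| + 8*ν^2*(t₂+t₃)) * ((t₂+t₃)/4)
            = 2*(E*(t₂+t₃)*|t₁-t₂|)*a^2 + 2*(t₂+t₃)^2*ν^2 := by ring
        linarith
      linarith
    linarith

lemma chanUB {ε ν a : ℝ} (hε : 1 ≤ ε) (ha : 0 ≤ a) (haν : a ≤ ν) (hν : 0 < ν) (hν2 : ν < 1/2)
    (T : Matrix (Fin 3) (Fin 3) ℝ) (hT : IsLDP ε T) :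
    hellingerSq (T.mulVec ![a, (1-ν)/2 + (ν-a), (1-ν)/2]) (T.mulVec ![0, (1-ν)/2, (1+ν)/2])
      ≤ 16*Real.exp ε*a^2 + 16*ν^2 := by
  obtain ⟨⟨hTnn, hTcol⟩, hLDP⟩ := hT
  have hE : 1 ≤ Real.exp ε := Real.one_le_exp (by linarith)
  have hc0 := hTcol 0
  have hc1 := hTcol 1
  have hc2 := hTcol 2
  rw [Fin.sum_univ_three] at hc0 hc1 hc2
  have hp : ∀ r, T.mulVec ![a, (1-ν)/2 + (ν-a), (1-ν)/2] r
      = T r 0 * a + T r 1 * ((1-ν)/2 + (ν-a)) + T r 2 * ((1-ν)/2) := by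
    intro r
    simp [Matrix.mulVec, dotProduct, Fin.sum_univ_three]
  have hq : ∀ r, T.mulVec ![0, (1-ν)/2, (1+ν)/2] r
      = T r 1 * ((1-ν)/2) + T r 2 * ((1+ν)/2) := by
    intro r
    simp [Matrix.mulVec, dotProduct, Fin.sum_univ_three]
  have key : ∀ r : Fin 3,
      (Real.sqrt (T.mulVec ![a, (1-ν)/2 + (ν-a), (1-ν)/2] r)
        - Real.sqrt (T.mulVec ![0, (1-ν)/2, (1+ν)/2] r))^2
      ≤ 8*Real.exp ε*a^2*|T r 0 - T r 1| + 8*ν^2*(T r 1 + T r 2) := by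
    intro r
    apply rowB hE ha hν.le (hTnn r 0) (hTnn r 1) (hTnn r 2) (hLDP r 0 1)
    · rw [hp r]
      have := hTnn r 0; have := hTnn r 1; have := hTnn r 2
      nlinarith
    · rw [hq r]
      have := hTnn r 1; have := hTnn r 2
      nlinarith
    · rw [hq r]
      have := hTnn r 1; have := hTnn r 2
      nlinarith
    · rw [hp r, hq r]; ring
  rw [hellingerSq, Fin.sum_univ_three]
  have k0 := key 0
  have k1 := key 1
  have k2 := key 2
  have m : (0:ℝ) ≤ 8*Real.exp ε*a^2 := by positivity
  have b : ∀ r : Fin 3, |T r 0 - T r 1| ≤ T r 0 + T r 1 := fun r =>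
    abs_le.mpr ⟨by linarith [hTnn r 0, hTnn r 1], by linarith [hTnn r 0, hTnn r 1]⟩
  have mb0 := mul_le_mul_of_nonneg_left (b 0) m
  have mb1 := mul_le_mul_of_nonneg_left (b 1) m
  have mb2 := mul_le_mul_of_nonneg_left (b 2) m
  have heq : 8*Real.exp ε*a^2*(T 0 0 + T 0 1) + 8*Real.exp ε*a^2*(T 1 0 + T 1 1)
      + 8*Real.exp ε*a^2*(T 2 0 + T 2 1) = 16*Real.exp ε*a^2 := by
    linear_combination (8*Real.exp ε*a^2) * hc0 + (8*Real.exp ε*a^2) * hc1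
  have heq2 : 8*ν^2*(T 0 1 + T 0 2) + 8*ν^2*(T 1 1 + T 1 2) + 8*ν^2*(T 2 1 + T 2 2)
      = 16*ν^2 := by
    linear_combination (8*ν^2) * hc1 + (8*ν^2) * hc2
  linarith

lemma chanA_LDP {ε : ℝ} (hE2 : 2 ≤ Real.exp ε) :
    IsLDP ε (!![2/3, 2/3, 1/3; (1:ℝ)/3, 1/3, 2/3; 0, 0, 0]) := by
  have h0 := Real.exp_pos ε
  have hε0 : 0 ≤ ε := by
    by_contra h
    push_neg at h
    have := Real.exp_lt_exp.mpr (lt_of_lt_of_le h (le_refl 0))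
    rw [Real.exp_zero] at this
    linarith
  refine ⟨⟨?_, ?_⟩, ?_⟩
  · intro r c; fin_cases r <;> fin_cases c <;> norm_num
  · intro c; rw [Fin.sum_univ_three]; fin_cases c <;> norm_num <;> rfl
  · intro r c c'
    fin_cases r <;> fin_cases c <;> fin_cases c' <;> simp <;> nlinarith [hε0]

lemma chanA_val {ν a : ℝ} (hν : 0 < ν) (hν2 : ν < 1/2) :
    ν^2/36 ≤ hellingerSq
      ((!![2/3, 2/3, 1/3; (1:ℝ)/3, 1/3, 2/3; 0, 0, 0]).mulVec ![a, (1-ν)/2 + (ν-a), (1-ν)/2])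
      ((!![2/3, 2/3, 1/3; (1:ℝ)/3, 1/3, 2/3; 0, 0, 0]).mulVec ![0, (1-ν)/2, (1+ν)/2]) := by
  have hs0 : (!![2/3, 2/3, 1/3; (1:ℝ)/3, 1/3, 2/3; 0, 0, 0]).mulVec
      ![a, (1-ν)/2 + (ν-a), (1-ν)/2] 0 = (3+ν)/6 := by
    simp [Matrix.mulVec, dotProduct, Fin.sum_univ_three]; ring
  have hu0 : (!![2/3, 2/3, 1/3; (1:ℝ)/3, 1/3, 2/3; 0, 0, 0]).mulVec
      ![0, (1-ν)/2, (1+ν)/2] 0 = (3-ν)/6 := by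
    simp [Matrix.mulVec, dotProduct, Fin.sum_univ_three]; ring
  have hsnn : (0:ℝ) ≤ (3+ν)/6 := by linarith
  have hunn : (0:ℝ) ≤ (3-ν)/6 := by linarith
  have hM : (Real.sqrt ((3+ν)/6) + Real.sqrt ((3-ν)/6))^2 ≤ 4 := by
    have h1 : Real.sqrt ((3+ν)/6) ≤ 1 := Real.sqrt_le_one.mpr (by linarith)
    have h2 : Real.sqrt ((3-ν)/6) ≤ 1 := Real.sqrt_le_one.mpr (by linarith)
    nlinarith [Real.sqrt_nonneg ((3+ν)/6), Real.sqrt_nonneg ((3-ν)/6)]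
  have key := div_le_sqrt_sub_sq' hsnn hunn (by norm_num : (0:ℝ) < 4) hM
  have heq : ((3+ν)/6 - (3-ν)/6)^2 / 4 = ν^2/36 := by ring
  rw [hellingerSq, Fin.sum_univ_three, hs0, hu0]
  nlinarith [sq_nonneg (Real.sqrt ((!![2/3, 2/3, 1/3; (1:ℝ)/3, 1/3, 2/3; 0, 0, 0]).mulVec
      ![a, (1-ν)/2 + (ν-a), (1-ν)/2] 1)
      - Real.sqrt ((!![2/3, 2/3, 1/3; (1:ℝ)/3, 1/3, 2/3; 0, 0, 0]).mulVec ![0, (1-ν)/2, (1+ν)/2] 1)),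
    sq_nonneg (Real.sqrt ((!![2/3, 2/3, 1/3; (1:ℝ)/3, 1/3, 2/3; 0, 0, 0]).mulVec
      ![a, (1-ν)/2 + (ν-a), (1-ν)/2] 2)
      - Real.sqrt ((!![2/3, 2/3, 1/3; (1:ℝ)/3, 1/3, 2/3; 0, 0, 0]).mulVec ![0, (1-ν)/2, (1+ν)/2] 2))]

set_option maxHeartbeats 1000000 in
lemma chanB_LDP {ε : ℝ} (hE2 : 2 ≤ Real.exp ε) :
    IsLDP ε (!![1/2, 1/(2*Real.exp ε), 1/(2*Real.exp ε);
                1/2, 1 - 1/(2*Real.exp ε), 1 - 1/(2*Real.exp ε); (0:ℝ), 0, 0]) := by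
  have h0 := Real.exp_pos ε
  have hε0 : 0 ≤ ε := by
    by_contra h
    push_neg at h
    have := Real.exp_lt_exp.mpr (lt_of_lt_of_le h (le_refl 0))
    rw [Real.exp_zero] at this
    linarith
  have hinv1 : Real.exp ε * (Real.exp ε)⁻¹ = 1 := mul_inv_cancel₀ (ne_of_gt h0)
  have hinv2 : (0:ℝ) ≤ (Real.exp ε)⁻¹ := inv_nonneg.mpr h0.le
  have hinv3 : (Real.exp ε)⁻¹ ≤ 1/2 := by
    rw [inv_le_comm₀ (by positivity) (by norm_num)]; norm_num; linarith
  refine ⟨⟨?_, ?_⟩, ?_⟩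
  · intro r c
    fin_cases r <;> fin_cases c <;> simp <;> linarith
  · intro c; rw [Fin.sum_univ_three]; fin_cases c <;> simp <;> ring
  · intro r c c'
    fin_cases r <;> fin_cases c <;> fin_cases c' <;> simp <;>
      nlinarith [hinv1, hinv2, hinv3, hE2, hε0]

set_option maxHeartbeats 1000000 in
lemma chanB_val {ε ν ρ a : ℝ} (hν : 0 < ν) (hν2 : ν < 1/2) (ha0 : 0 ≤ a) (haν : a ≤ ν)
    (hρ : 0 < ρ) (haρ : a ≤ ρ) (haρ5 : ρ/5 ≤ a) (hE2 : 2 ≤ Real.exp ε)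
    (hEρ : Real.exp ε * ρ ≤ 1) :
    Real.exp ε * ρ^2/1200 ≤ hellingerSq
      ((!![1/2, 1/(2*Real.exp ε), 1/(2*Real.exp ε);
           1/2, 1 - 1/(2*Real.exp ε), 1 - 1/(2*Real.exp ε); (0:ℝ), 0, 0]).mulVec
        ![a, (1-ν)/2 + (ν-a), (1-ν)/2])
      ((!![1/2, 1/(2*Real.exp ε), 1/(2*Real.exp ε);
           1/2, 1 - 1/(2*Real.exp ε), 1 - 1/(2*Real.exp ε); (0:ℝ), 0, 0]).mulVec
        ![0, (1-ν)/2, (1+ν)/2]) := by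
  have h0 := Real.exp_pos ε
  set w : ℝ := 1/(2*Real.exp ε) with hwdef
  have hw0 : 0 < w := by positivity
  have hw4 : w ≤ 1/4 := by
    rw [hwdef, div_le_div_iff₀ (by positivity) (by norm_num)]; linarith
  have haw : a ≤ 2*w := by
    have : ρ ≤ 2*w := by
      rw [hwdef, show (2:ℝ)*(1/(2*Real.exp ε)) = 1/(Real.exp ε) from by field_simp,
        le_div_iff₀ h0]
      linarith
    linarith
  have hs0 : (!![1/2, 1/(2*Real.exp ε), 1/(2*Real.exp ε);
           1/2, 1 - 1/(2*Real.exp ε), 1 - 1/(2*Real.exp ε); (0:ℝ), 0, 0]).mulVec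
        ![a, (1-ν)/2 + (ν-a), (1-ν)/2] 0 = a/2 + w*(1-a) := by
    simp [Matrix.mulVec, dotProduct, Fin.sum_univ_three, hwdef]; ring
  have hu0 : (!![1/2, 1/(2*Real.exp ε), 1/(2*Real.exp ε);
           1/2, 1 - 1/(2*Real.exp ε), 1 - 1/(2*Real.exp ε); (0:ℝ), 0, 0]).mulVec
        ![0, (1-ν)/2, (1+ν)/2] 0 = w := by
    simp [Matrix.mulVec, dotProduct, Fin.sum_univ_three, hwdef]; ring
  have hsnn : (0:ℝ) ≤ a/2 + w*(1-a) := by nlinarith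
  have hM : (Real.sqrt (a/2 + w*(1-a)) + Real.sqrt w)^2 ≤ 6*w := by
    have e1 := Real.sq_sqrt hsnn
    have e2 := Real.sq_sqrt hw0.le
    nlinarith [sq_nonneg (Real.sqrt (a/2 + w*(1-a)) - Real.sqrt w),
      Real.sqrt_nonneg (a/2 + w*(1-a)), Real.sqrt_nonneg w, mul_nonneg hw0.le ha0]
  have key := div_le_sqrt_sub_sq' hsnn hw0.le (by positivity : (0:ℝ) < 6*w) hM
  have hnum : (ρ/20)^2 ≤ (a/2 + w*(1-a) - w)^2 := by
    have h1 : a/2 + w*(1-a) - w = a*(1/2 - w) := by ring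
    rw [h1]
    have h2 : ρ/20 ≤ a*(1/2 - w) := by nlinarith
    nlinarith [hρ.le]
  have hfrac : Real.exp ε * ρ^2/1200 = (ρ/20)^2/(6*w) := by
    rw [hwdef]; field_simp; ring
  have hmono : (ρ/20)^2/(6*w) ≤ (a/2 + w*(1-a) - w)^2/(6*w) := by gcongr
  rw [hellingerSq, Fin.sum_univ_three, hs0, hu0]
  have t1n := sq_nonneg (Real.sqrt ((!![1/2, 1/(2*Real.exp ε), 1/(2*Real.exp ε);
           1/2, 1 - 1/(2*Real.exp ε), 1 - 1/(2*Real.exp ε); (0:ℝ), 0, 0]).mulVec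
        ![a, (1-ν)/2 + (ν-a), (1-ν)/2] 1) - Real.sqrt ((!![1/2, 1/(2*Real.exp ε), 1/(2*Real.exp ε);
           1/2, 1 - 1/(2*Real.exp ε), 1 - 1/(2*Real.exp ε); (0:ℝ), 0, 0]).mulVec
        ![0, (1-ν)/2, (1+ν)/2] 1))
  have t2n := sq_nonneg (Real.sqrt ((!![1/2, 1/(2*Real.exp ε), 1/(2*Real.exp ε);
           1/2, 1 - 1/(2*Real.exp ε), 1 - 1/(2*Real.exp ε); (0:ℝ), 0, 0]).mulVec
        ![a, (1-ν)/2 + (ν-a), (1-ν)/2] 2) - Real.sqrt ((!![1/2, 1/(2*Real.exp ε), 1/(2*Real.exp ε);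
           1/2, 1 - 1/(2*Real.exp ε), 1 - 1/(2*Real.exp ε); (0:ℝ), 0, 0]).mulVec
        ![0, (1-ν)/2, (1+ν)/2] 2))
  linarith

set_option maxHeartbeats 4000000 in
/-- Sample complexity lower bound for general (ternary) distributions:
hard instances with prescribed Hellinger divergence and total variation distance. -/
theorem stmt2 :
    ∃ c₀ c C : ℝ, 0 < c₀ ∧ 0 < c ∧ c ≤ C ∧
      ∀ ρ ν : ℝ, 0 < ρ → ρ < 1 / 2 → 0 < ν → ν < 1 / 2 → 2 * ν ^ 2 ≤ ρ → ρ ≤ ν →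
        ∃ p q : Fin 3 → ℝ, IsDist p ∧ IsDist q ∧
          hellingerSq p q = ρ ∧ tvDist p q = ν ∧
          ∀ ε : ℝ, 1 ≤ ε → Real.exp ε ≤ c₀ / ρ →
            ∀ V : ℝ,
              V = sSup {x : ℝ | ∃ T : Matrix (Fin 3) (Fin 3) ℝ,
                  IsLDP ε T ∧ x = hellingerSq (T.mulVec p) (T.mulVec q)} →
              c * max (ν ^ 2) (Real.exp ε * ρ ^ 2) ≤ V ∧
              V ≤ C * max (ν ^ 2) (Real.exp ε * ρ ^ 2) := by
  refine ⟨1, 1/1200, 32, by norm_num, by norm_num, by norm_num, ?_⟩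
  intro ρ ν hρ hρ2 hν hν2 hνρ hρν
  have hq2 : (0:ℝ) < (1-ν)/2 := by linarith
  have hq3 : (0:ℝ) < (1+ν)/2 := by linarith
  set K : ℝ := (Real.sqrt ((1-ν)/2) - Real.sqrt ((1+ν)/2))^2 with hKdef
  have hKnn : 0 ≤ K := sq_nonneg _
  have hK : K ≤ (10/17) * ν^2 := by
    have hs : Real.sqrt ((1-ν)/2) * Real.sqrt ((1+ν)/2) = Real.sqrt ((1-ν)/2 * ((1+ν)/2)) :=
      (Real.sqrt_mul hq2.le _).symm
    have hprod : (7/20 : ℝ) ≤ Real.sqrt ((1-ν)/2 * ((1+ν)/2)) := by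
      rw [show ((7:ℝ)/20) = Real.sqrt ((7/20)^2) from (Real.sqrt_sq (by norm_num)).symm]
      apply Real.sqrt_le_sqrt
      nlinarith
    have hm : (17/10 : ℝ) ≤ (Real.sqrt ((1-ν)/2) + Real.sqrt ((1+ν)/2))^2 := by
      have e1 := Real.sq_sqrt hq2.le
      have e2 := Real.sq_sqrt hq3.le
      nlinarith [Real.sqrt_nonneg ((1-ν)/2), Real.sqrt_nonneg ((1+ν)/2)]
    have := sqrt_sub_sq_le_div' hq2.le hq3.le (by norm_num : (0:ℝ) < 17/10) hm
    calc K ≤ ((1-ν)/2 - (1+ν)/2)^2 / (17/10) := this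
      _ = (10/17) * ν^2 := by ring_nf
  set f : ℝ → ℝ := fun x => x + (Real.sqrt ((1-ν)/2 + (ν - x)) - Real.sqrt ((1-ν)/2))^2 + K
    with hfdef
  have hcont : Continuous f := by
    apply Continuous.add
    apply Continuous.add continuous_id
    · apply Continuous.pow
      exact (Real.continuous_sqrt.comp (by continuity)).sub continuous_const
    · exact continuous_const
  have hf0 : f 0 ≤ ρ := by
    have e0 : (1-ν)/2 + (ν - 0) = (1+ν)/2 := by ring
    have : f 0 = (Real.sqrt ((1+ν)/2) - Real.sqrt ((1-ν)/2))^2 + K := by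
      simp only [hfdef]; rw [e0]; ring
    rw [this]
    have : (Real.sqrt ((1+ν)/2) - Real.sqrt ((1-ν)/2))^2 = K := by rw [hKdef]; ring
    rw [this]
    nlinarith
  have hfν : ρ ≤ f ν := by
    have : f ν = ν + K := by simp only [hfdef]; rw [show ν - ν = 0 from by ring]; simp
    rw [this]; linarith
  obtain ⟨a, hamem, hfa⟩ := intermediate_value_Icc (by linarith : (0:ℝ) ≤ ν)
    hcont.continuousOn ⟨hf0, hfν⟩
  obtain ⟨ha0, haν⟩ := hamem
  set p : Fin 3 → ℝ := ![a, (1-ν)/2 + (ν-a), (1-ν)/2] with hpdef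
  set q : Fin 3 → ℝ := ![0, (1-ν)/2, (1+ν)/2] with hqdef
  set t1 : ℝ := (Real.sqrt ((1-ν)/2 + (ν - a)) - Real.sqrt ((1-ν)/2))^2 with ht1def
  have ht1nn : 0 ≤ t1 := sq_nonneg _
  have ht1ub : t1 ≤ (ν - a)^2 := by
    have hmono : Real.sqrt ((1-ν)/2) ≤ Real.sqrt ((1-ν)/2 + (ν - a)) :=
      Real.sqrt_le_sqrt (by linarith)
    have e1 := Real.sq_sqrt hq2.le
    have hm : (1:ℝ) ≤ (Real.sqrt ((1-ν)/2 + (ν - a)) + Real.sqrt ((1-ν)/2))^2 := by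
      nlinarith [Real.sqrt_nonneg ((1-ν)/2)]
    have := sqrt_sub_sq_le_div' (by linarith : (0:ℝ) ≤ (1-ν)/2 + (ν - a)) hq2.le
      (by norm_num : (0:ℝ) < 1) hm
    calc t1 ≤ ((1-ν)/2 + (ν - a) - (1-ν)/2)^2 / 1 := this
      _ = (ν - a)^2 := by ring
  have hfa' : a + t1 + K = ρ := hfa
  have haρ : a ≤ ρ := by linarith
  have haρ5 : ρ/5 ≤ a := by nlinarith
  refine ⟨p, q, ?_, ?_, ?_, ?_, ?_⟩
  · constructor
    · intro i; fin_cases i <;> simp [hpdef] <;> linarith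
    · rw [Fin.sum_univ_three]; simp [hpdef]; ring
  · constructor
    · intro i; fin_cases i <;> simp [hqdef] <;> linarith
    · rw [Fin.sum_univ_three]; simp [hqdef]; ring
  · rw [hellingerSq, Fin.sum_univ_three]
    simp only [hpdef, hqdef, Matrix.cons_val_zero, Matrix.cons_val_one, Matrix.head_cons,
      Matrix.cons_val_two, Matrix.tail_cons]
    rw [Real.sqrt_zero]
    have : (Real.sqrt a - 0)^2 = a := by rw [sub_zero]; exact Real.sq_sqrt ha0
    rw [this]
    exact hfa'
  · rw [tvDist, Fin.sum_univ_three]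
    simp only [hpdef, hqdef, Matrix.cons_val_zero, Matrix.cons_val_one, Matrix.head_cons,
      Matrix.cons_val_two, Matrix.tail_cons]
    rw [sub_zero, abs_of_nonneg ha0,
      show (1-ν)/2 + (ν-a) - (1-ν)/2 = ν - a from by ring,
      abs_of_nonneg (by linarith : (0:ℝ) ≤ ν - a),
      show (1-ν)/2 - (1+ν)/2 = -ν from by ring, abs_neg, abs_of_nonneg hν.le]
    ring
  · intro ε hε hexp V hV
    set E : ℝ := Real.exp ε with hEdef
    have hE1 : 1 ≤ E := Real.one_le_exp (by linarith)
    have hE2 : 2 ≤ E := by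
      have h1 : Real.exp 1 ≤ E := Real.exp_le_exp.mpr hε
      have := Real.exp_one_gt_d9
      linarith
    have hE0 : 0 < E := by linarith
    have hEρ : E * ρ ≤ 1 := (le_div_iff₀ hρ).mp hexp
    set S : Set ℝ := {x : ℝ | ∃ T : Matrix (Fin 3) (Fin 3) ℝ,
        IsLDP ε T ∧ x = hellingerSq (T.mulVec p) (T.mulVec q)} with hSdef
    have hub : ∀ x ∈ S, x ≤ 32 * max (ν ^ 2) (E * ρ ^ 2) := by
      rintro x ⟨T, hT, rfl⟩
      have h1 := chanUB hε ha0 haν hν hν2 T hT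
      have h2 : E * a^2 ≤ E * ρ^2 :=
        mul_le_mul_of_nonneg_left (by nlinarith : a^2 ≤ ρ^2) hE0.le
      have h3 : ν^2 ≤ max (ν^2) (E*ρ^2) := le_max_left _ _
      have h4 : E*ρ^2 ≤ max (ν^2) (E*ρ^2) := le_max_right _ _
      calc hellingerSq (T.mulVec p) (T.mulVec q) ≤ 16*E*a^2 + 16*ν^2 := h1
        _ ≤ 16*(E*ρ^2) + 16*ν^2 := by linarith
        _ ≤ 32 * max (ν ^ 2) (E * ρ ^ 2) := by linarith
    have hbdd : BddAbove S := ⟨32 * max (ν ^ 2) (E * ρ ^ 2), fun x hx => hub x hx⟩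
    constructor
    · have hAv : ν^2/36 ≤ hellingerSq
          ((!![2/3, 2/3, 1/3; (1:ℝ)/3, 1/3, 2/3; 0, 0, 0]).mulVec p)
          ((!![2/3, 2/3, 1/3; (1:ℝ)/3, 1/3, 2/3; 0, 0, 0]).mulVec q) :=
        chanA_val hν hν2
      have hAmem : hellingerSq
          ((!![2/3, 2/3, 1/3; (1:ℝ)/3, 1/3, 2/3; 0, 0, 0]).mulVec p)
          ((!![2/3, 2/3, 1/3; (1:ℝ)/3, 1/3, 2/3; 0, 0, 0]).mulVec q) ∈ S :=
        ⟨_, chanA_LDP hE2, rfl⟩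
      have hBv : E * ρ^2/1200 ≤ hellingerSq
          ((!![1/2, 1/(2*Real.exp ε), 1/(2*Real.exp ε);
               1/2, 1 - 1/(2*Real.exp ε), 1 - 1/(2*Real.exp ε); (0:ℝ), 0, 0]).mulVec p)
          ((!![1/2, 1/(2*Real.exp ε), 1/(2*Real.exp ε);
               1/2, 1 - 1/(2*Real.exp ε), 1 - 1/(2*Real.exp ε); (0:ℝ), 0, 0]).mulVec q) :=
        chanB_val hν hν2 ha0 haν hρ haρ haρ5 hE2 hEρ
      have hBmem : hellingerSq
          ((!![1/2, 1/(2*Real.exp ε), 1/(2*Real.exp ε);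
               1/2, 1 - 1/(2*Real.exp ε), 1 - 1/(2*Real.exp ε); (0:ℝ), 0, 0]).mulVec p)
          ((!![1/2, 1/(2*Real.exp ε), 1/(2*Real.exp ε);
               1/2, 1 - 1/(2*Real.exp ε), 1 - 1/(2*Real.exp ε); (0:ℝ), 0, 0]).mulVec q) ∈ S :=
        ⟨_, chanB_LDP hE2, rfl⟩
      have hA := le_csSup hbdd hAmem
      have hB := le_csSup hbdd hBmem
      rw [hV]
      rcases le_total (ν^2) (E * ρ^2) with hmx | hmx
      · rw [max_eq_right hmx]
        calc (1/1200 : ℝ) * (E*ρ^2) = E*ρ^2/1200 := by ring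
          _ ≤ _ := le_trans hBv hB
      · rw [max_eq_left hmx]
        calc (1/1200 : ℝ) * ν^2 ≤ ν^2/36 := by nlinarith [sq_nonneg ν]
          _ ≤ _ := le_trans hAv hA
    · rw [hV]
      apply Real.sSup_le hub
      positivity
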